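/- Let n be a natural number, a₀, …, a_n integers, and define f : ℤ → ℤ by f(k) = Σ_{i=0}^n a_i · C(k,i). Then gcd{ k·f(k) : k ∈ ℤ } divides gcd{ f(k) : k ∈ ℤ } · lcm{1, 2, …, n+1}; equivalently, the integer gcd(a₀,…,a_n) · lcm{1,…,n+1} lies in the subgroup of ℤ generated by { k·f(k) : k ∈ ℤ }. -/
import Mathlib


open Finset

private theorem my_choose_id (r : ℤ) (i : ℕ) :
    (i + 1 : ℤ) * Ring.choose r (i+1) = (r - i) * Ring.choose r i := by
  have h1 := Ring.descPochhammer_eq_factorial_smul_choose r (i+1)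
  have h2 := Ring.descPochhammer_eq_factorial_smul_choose r i
  have h3 : (descPochhammer ℤ (i+1)).smeval r = (descPochhammer ℤ i).smeval r * (r - i) := by
    rw [descPochhammer_succ_right]
    simp [Polynomial.smeval_mul, Polynomial.smeval_sub, Polynomial.smeval_X,
      Polynomial.smeval_natCast]
  rw [h1, h2] at h3
  rw [Nat.factorial_succ, nsmul_eq_mul, nsmul_eq_mul] at h3
  push_cast at h3
  have hfac : ((i.factorial : ℤ)) ≠ 0 := by exact_mod_cast i.factorial_ne_zero
  apply mul_left_cancel₀ hfac
  ring_nf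
  ring_nf at h3
  linarith [h3]


/-- **Lemma (Chebyshev-type bound).**
If `f(k) = Σ_{i=0}^n a_i · C(k,i)` with integers `a_i`, then
`gcd{ k·f(k) : k ∈ ℤ }` divides `gcd{ f(k) : k ∈ ℤ } · lcm{1,…,n+1}`; equivalently
(since `gcd{ f(k) } = gcd(a_0,…,a_n)`), the integer `gcd(a_0,…,a_n) · lcm{1,…,n+1}`
lies in the subgroup of `ℤ` generated by `{ k·f(k) : k ∈ ℤ }`. -/
theorem gcd_mul_self_dvd_gcd_mul_lcm (n : ℕ) (a : ℕ → ℤ) (f : ℤ → ℤ)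
    (hf : ∀ k : ℤ, f k = ∑ i ∈ Finset.range (n + 1), a i * Ring.choose k i) :
    (Finset.range (n + 1)).gcd a * (Finset.Icc (1 : ℤ) (n + 1)).lcm id ∈
      AddSubgroup.closure {x : ℤ | ∃ k : ℤ, x = k * f k} := by
  set S : Set ℤ := {x : ℤ | ∃ k : ℤ, x = k * f k} with hS
  obtain ⟨g0, hg0⟩ := Int.subgroup_cyclic (AddSubgroup.closure S)
  have hmem : ∀ x : ℤ, x ∈ AddSubgroup.closure S ↔ g0 ∣ x := by
    intro x
    rw [hg0, AddSubgroup.mem_closure_singleton]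
    constructor
    · rintro ⟨m, hm⟩
      exact ⟨m, by rw [← hm, zsmul_eq_mul, Int.cast_id, mul_comm]⟩
    · rintro ⟨c, rfl⟩
      exact ⟨c, by rw [zsmul_eq_mul, Int.cast_id, mul_comm]⟩
  rw [hmem]
  set b : ℕ → ℤ := fun j => (if j ≤ n then (j:ℤ) * a j else 0) + (j:ℤ) * a (j - 1) with hb
  -- expansion of k * f k in the binomial basis
  have hexp : ∀ k : ℤ, k * f k = ∑ j ∈ Finset.range (n+2), b j * Ring.choose k j := by
    intro k
    rw [hf k, Finset.mul_sum]
    have step : ∀ i : ℕ, k * (a i * Ring.choose k i)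
        = (i:ℤ) * a i * Ring.choose k i + ((i:ℤ)+1) * a i * Ring.choose k (i+1) := by
      intro i
      linear_combination (-(a i)) * my_choose_id k i
    calc ∑ i ∈ Finset.range (n+1), k * (a i * Ring.choose k i)
        = ∑ i ∈ Finset.range (n+1),
            ((i:ℤ) * a i * Ring.choose k i + ((i:ℤ)+1) * a i * Ring.choose k (i+1)) :=
          Finset.sum_congr rfl (fun i _ => step i)
      _ = (∑ i ∈ Finset.range (n+1), (i:ℤ) * a i * Ring.choose k i)
            + ∑ i ∈ Finset.range (n+1), ((i:ℤ)+1) * a i * Ring.choose k (i+1) :=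
          Finset.sum_add_distrib
      _ = ∑ j ∈ Finset.range (n+2), b j * Ring.choose k j := by
          simp only [hb, add_mul, Finset.sum_add_distrib]
          congr 1
          · conv_rhs => rw [Finset.sum_range_succ]
            rw [if_neg (by omega), zero_mul, add_zero]
            refine Finset.sum_congr rfl (fun i hi => ?_)
            have hi' : i ≤ n := by
              have := Finset.mem_range.mp hi; omega
            rw [if_pos hi']
          · conv_rhs => rw [Finset.sum_range_succ']
            simp only [Nat.cast_zero, zero_mul, add_zero, Nat.add_sub_cancel]
            rw [← Finset.sum_add_distrib]
            apply Finset.sum_congr rfl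
            intro i hi
            push_cast
            ring
  -- each coefficient b j (for j ≤ n+1) is divisible by g0
  have hBmem : ∀ j : ℕ, j ≤ n + 1 → g0 ∣ b j := by
    intro j
    induction j using Nat.strong_induction_on with
    | _ j ih =>
      intro hj
      have hgj : g0 ∣ (↑j : ℤ) * f ↑j := (hmem _).mp (AddSubgroup.subset_closure ⟨j, rfl⟩)
      have hsum : (↑j:ℤ) * f ↑j
          = ∑ m ∈ Finset.range (j+1), b m * (Nat.choose j m : ℤ) := by
        rw [hexp (j:ℤ)]
        rw [← Finset.sum_subset (Finset.range_subset_range.mpr (by omega : j+1 ≤ n+2))]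
        · exact Finset.sum_congr rfl fun m _ => by rw [Ring.choose_natCast]
        · intro m hm hm'
          have : j < m := by
            simp only [Finset.mem_range] at hm'
            omega
          rw [Ring.choose_natCast, Nat.choose_eq_zero_of_lt this]
          simp
      rw [Finset.sum_range_succ, Nat.choose_self] at hsum
      have hbj : b j = (↑j:ℤ) * f ↑j - ∑ m ∈ Finset.range j, b m * (Nat.choose j m : ℤ) := by
        rw [hsum]; ring
      rw [hbj]
      refine dvd_sub hgj (Finset.dvd_sum fun m hm => ?_)
      have hmj : m < j := Finset.mem_range.mp hm
      exact (ih m hmj (by omega)).mul_right _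
  set L : ℤ := (Finset.Icc (1 : ℤ) (n + 1)).lcm id with hL
  have hL1 : ∀ j : ℕ, 1 ≤ j → j ≤ n + 1 → ((j:ℤ)) ∣ L := by
    intro j h1 h2
    have : (j:ℤ) ∈ Finset.Icc (1:ℤ) (n+1) := by
      rw [Finset.mem_Icc]
      constructor <;> [exact_mod_cast h1; exact_mod_cast h2]
    exact Finset.dvd_lcm this
  -- base case: g0 ∣ L * a n
  have h_an : g0 ∣ L * a n := by
    have hbn : b (n+1) = ((n:ℤ)+1) * a n := by
      simp only [hb]
      rw [if_neg (by omega), Nat.add_sub_cancel]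
      push_cast
      ring
    have h1 : g0 ∣ ((n:ℤ)+1) * a n := hbn ▸ hBmem (n+1) le_rfl
    obtain ⟨c, hc⟩ := hL1 (n+1) (by omega) le_rfl
    push_cast at hc
    have heq : L * a n = c * (((n:ℤ)+1) * a n) := by rw [hc]; ring
    rw [heq]
    exact h1.mul_left c
  -- downward step
  have hstep : ∀ j : ℕ, 1 ≤ j → j ≤ n → g0 ∣ L * a j → g0 ∣ L * a (j-1) := by
    intro j h1 h2 hLa
    have hgb : g0 ∣ b j := hBmem j (by omega)
    have hbj : b j = (j:ℤ) * a j + (j:ℤ) * a (j-1) := by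
      simp only [hb]
      rw [if_pos h2]
    obtain ⟨c, hc⟩ := hL1 j h1 (by omega)
    have key : g0 ∣ L * a j + L * a (j-1) := by
      have heq : L * a j + L * a (j-1) = c * b j := by rw [hbj, hc]; ring
      rw [heq]
      exact hgb.mul_left c
    exact (dvd_add_right hLa).mp key
  -- all coefficients
  have hall : ∀ t : ℕ, t ≤ n → g0 ∣ L * a (n - t) := by
    intro t
    induction t with
    | zero => intro _; simpa using h_an
    | succ t ih =>
      intro ht
      have h1 : g0 ∣ L * a (n - t) := ih (by omega)
      have h2 := hstep (n - t) (by omega) (by omega) h1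
      have heq : n - t - 1 = n - (t+1) := by omega
      rwa [heq] at h2
  have hall' : ∀ i ∈ Finset.range (n+1), g0 ∣ L * a i := by
    intro i hi
    have hi' : i ≤ n := by simpa [Nat.lt_succ_iff] using hi
    have := hall (n - i) (by omega)
    rwa [Nat.sub_sub_self hi'] at this
  have hgcd : g0 ∣ (Finset.range (n+1)).gcd (fun i => L * a i) :=
    Finset.dvd_gcd hall'
  rw [Finset.gcd_mul_left] at hgcd
  have hassoc : (normalize L : ℤ) * (Finset.range (n+1)).gcd a ∣
      (Finset.range (n+1)).gcd a * L := by
    have h1 : (normalize L : ℤ) ∣ L := (normalize_associated L).dvd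
    calc (normalize L : ℤ) * (Finset.range (n+1)).gcd a
        ∣ L * (Finset.range (n+1)).gcd a := mul_dvd_mul_right h1 _
      _ = (Finset.range (n+1)).gcd a * L := mul_comm _ _
      _ ∣ _ := dvd_rfl
  exact hgcd.trans hassoc
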